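/- Let n ≥ 1 and R > 0. Then ∫_{B(0,R) ⊂ ℝ^{2n}} u_R(z) dz = (π^{n+1/2}·Γ(n + 3/2) / (4n·Γ(n)·Γ(n+2))) · R^{2n+2}. Equivalently, with Q = 2n+2, this equals (π^{(Q−1)/2}·Γ((Q+1)/2) / (2(Q−2)·Γ((Q+2)/2)·Γ((Q−2)/2))) · R^Q. -/

import Mathlib

open Metric MeasureTheory Real

/-- The map `z = (x, y) ↦ z⊥ = (y, -x)` on `ℝ^{2n}`. -/
noncomputable def zperp (n : ℕ) (z : EuclideanSpace ℝ (Fin (2 * n))) :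
    EuclideanSpace ℝ (Fin (2 * n)) := WithLp.toLp 2 (fun i : Fin (2 * n) =>
  if h : (i : ℕ) < n then z ⟨(i : ℕ) + n, by have := i.isLt; omega⟩
  else -z ⟨(i : ℕ) - n, by have := i.isLt; omega⟩)

/-- The candidate isoperimetric profile `u_R` on `ℝ^{2n}`. -/
noncomputable def uR (n : ℕ) (R : ℝ) (z : EuclideanSpace ℝ (Fin (2 * n))) : ℝ :=
  if ‖z‖ ≤ R then
    π * R ^ 2 / 8 + ‖z‖ / 4 * Real.sqrt (R ^ 2 - ‖z‖ ^ 2) - R ^ 2 / 4 * Real.arcsin (‖z‖ / R)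
  else 0

/-- The class `D(R)`: continuous nonnegative functions on the closed ball, vanishing on the
sphere, `C²` inside, `W^{1,1}` inside, whose support is not contained in any smaller ball. -/
def memD (n : ℕ) (R : ℝ) (u : EuclideanSpace ℝ (Fin (2 * n)) → ℝ) : Prop :=
  ContinuousOn u (closedBall 0 R) ∧
  (∀ z ∈ closedBall (0 : EuclideanSpace ℝ (Fin (2 * n))) R, 0 ≤ u z) ∧
  (∀ z ∈ sphere (0 : EuclideanSpace ℝ (Fin (2 * n))) R, u z = 0) ∧
  ContDiffOn ℝ 2 u (ball 0 R) ∧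
  IntegrableOn u (ball 0 R) ∧
  IntegrableOn (fun z => gradient u z) (ball 0 R) ∧
  (∀ r : ℝ, r < R → ¬ (Function.support u ∩ closedBall 0 R ⊆ ball 0 r))

/-- Half the volume: `∫_{B(0,R)} u`. -/
noncomputable def hVol (n : ℕ) (R : ℝ) (u : EuclideanSpace ℝ (Fin (2 * n)) → ℝ) : ℝ :=
  ∫ z in ball (0 : EuclideanSpace ℝ (Fin (2 * n))) R, u z

/-- The H-perimeter functional: `∫_{B(0,R)} |∇u(z) + z⊥/2| dz`. -/
noncomputable def hPer (n : ℕ) (R : ℝ) (u : EuclideanSpace ℝ (Fin (2 * n)) → ℝ) : ℝ :=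
  ∫ z in ball (0 : EuclideanSpace ℝ (Fin (2 * n))) R,
    ‖gradient u z + (1 / 2 : ℝ) • zperp n z‖


lemma gamma_half (n : ℕ) : Real.Gamma ((n : ℝ) + 1/2) = Real.sqrt π * (2*n).factorial / (4^n * n.factorial) := by
  induction n with
  | zero =>
      rw [show ((0:ℕ):ℝ) + 1/2 = 1/2 by norm_num, Real.Gamma_one_half_eq]
      norm_num
  | succ m ih =>
      have h : ((m : ℝ) + 1) + 1/2 = ((m : ℝ) + 1/2) + 1 := by ring
      rw [Nat.cast_succ, h, Real.Gamma_add_one (by positivity), ih]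
      have h2 : (2*(m+1)).factorial = (2*m+2) * ((2*m+1) * (2*m).factorial) := by
        have : 2*(m+1) = (2*m+1)+1 := by ring
        rw [this, Nat.factorial_succ, Nat.factorial_succ]
      rw [h2, Nat.factorial_succ]
      push_cast
      rw [show (4:ℝ)^(m+1) = 4 * 4^m by ring]
      have hm : (m.factorial : ℝ) ≠ 0 := by positivity
      have h4m : (4:ℝ)^m ≠ 0 := by positivity
      field_simp
      ring

lemma wallis (n : ℕ) : (∫ x in (0:ℝ)..(π/2), Real.sin x ^ (2*n)) = π/2 * (2*n).factorial / (4^n * (n.factorial)^2) := by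
  induction n with
  | zero => simp
  | succ m ih =>
      have h : 2*(m+1) = 2*m + 2 := by ring
      rw [h, integral_sin_pow]
      simp only [Real.sin_zero, Real.cos_pi_div_two, Real.sin_pi_div_two]
      rw [ih]
      have h2 : (2*m+2).factorial = (2*m+2) * ((2*m+1) * (2*m).factorial) := by
        rw [show 2*m+2 = (2*m+1)+1 from rfl, Nat.factorial_succ, Nat.factorial_succ]
      rw [h2, Nat.factorial_succ, zero_pow (by omega)]
      push_cast
      rw [show (4:ℝ)^(m+1) = 4 * 4^m by ring]
      have hm : (m.factorial : ℝ) ≠ 0 := by positivity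
      have h4m : (4:ℝ)^m ≠ 0 := by positivity
      field_simp
      ring

lemma P1 (k : ℕ) : (∫ θ in (0:ℝ)..(π/2), Real.sin θ ^ k * Real.cos θ) = 1/(k+1) := by
  have h := intervalIntegral.integral_comp_smul_deriv (a := (0:ℝ)) (b := π/2)
    (f := Real.sin) (f' := Real.cos) (g := fun y => y ^ k)
    (fun x _ => Real.hasDerivAt_sin x) Real.continuousOn_cos (continuous_pow k)
  simp only [smul_eq_mul, Function.comp, Real.sin_zero, Real.sin_pi_div_two] at h
  rw [show (∫ θ in (0:ℝ)..(π/2), Real.sin θ ^ k * Real.cos θ)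
      = ∫ θ in (0:ℝ)..(π/2), Real.cos θ * Real.sin θ ^ k from
    intervalIntegral.integral_congr (fun x _ => by ring), h, integral_pow]
  simp

lemma P3 (k : ℕ) : (∫ θ in (0:ℝ)..(π/2), θ * (Real.sin θ ^ k * Real.cos θ))
    = (π/2) * (1/(k+1)) - (1/(k+1)) * ∫ θ in (0:ℝ)..(π/2), Real.sin θ ^ (k+1) := by
  have hv : ∀ x ∈ Set.uIcc (0:ℝ) (π/2),
      HasDerivAt (fun θ => Real.sin θ ^ (k+1) / (k+1)) (Real.sin x ^ k * Real.cos x) x := by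
    intro x _
    have h := ((Real.hasDerivAt_sin x).pow (k+1)).div_const ((k:ℝ)+1)
    refine h.congr_deriv ?_
    rw [Nat.add_sub_cancel, Nat.cast_succ, mul_assoc, mul_div_right_comm, div_self (by positivity), one_mul]
  have h := intervalIntegral.integral_mul_deriv_eq_deriv_mul
    (u := fun x => x) (u' := fun _ => (1:ℝ))
    (v := fun θ => Real.sin θ ^ (k+1) / (k+1)) (v' := fun θ => Real.sin θ ^ k * Real.cos θ)
    (fun x _ => hasDerivAt_id x) hv
    (intervalIntegrable_const)
    ((Continuous.intervalIntegrable (by continuity) _ _))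
  rw [h]
  simp only [Real.sin_zero, Real.sin_pi_div_two, one_pow, one_mul]
  rw [intervalIntegral.integral_congr (g := fun θ => (1/((k:ℝ)+1)) * Real.sin θ ^ (k+1))
      (fun x _ => by field_simp), intervalIntegral.integral_const_mul]
  have : (0:ℝ) ^ (k+1) = 0 := zero_pow (Nat.succ_ne_zero k)
  rw [this]
  field_simp
  ring

set_option maxHeartbeats 1000000 in
lemma keyK (m : ℕ) :
    (∫ θ in (0:ℝ)..(π/2),
      Real.sin θ ^ (2*m+1) * Real.cos θ * (π/8 + Real.sin θ * Real.cos θ/4 - θ/4))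
    = π * ((2*m+2).factorial : ℝ) * (2*m+3) /
        (16 * 4^(m+1) * (m+1) * (m+2) * (((m+1).factorial : ℝ))^2) := by
  have hcong : ∀ θ ∈ Set.uIcc (0:ℝ) (π/2),
      Real.sin θ ^ (2*m+1) * Real.cos θ * (π/8 + Real.sin θ * Real.cos θ/4 - θ/4)
      = π/8 * (Real.sin θ ^ (2*m+1) * Real.cos θ)
        - 1/4 * (θ * (Real.sin θ ^ (2*m+1) * Real.cos θ))
        + 1/4 * (Real.sin θ ^ (2*m+2) - Real.sin θ ^ (2*m+4)) := by
    intro θ _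
    linear_combination (Real.sin θ ^ (2*m+2) / 4) * (Real.sin_sq_add_cos_sq θ)
  rw [intervalIntegral.integral_congr hcong]
  have i1 : IntervalIntegrable (fun θ => π/8 * (Real.sin θ ^ (2*m+1) * Real.cos θ))
      volume 0 (π/2) := (Continuous.intervalIntegrable (by continuity) _ _)
  have i2 : IntervalIntegrable (fun θ => 1/4 * (θ * (Real.sin θ ^ (2*m+1) * Real.cos θ)))
      volume 0 (π/2) := (Continuous.intervalIntegrable (by continuity) _ _)
  have i3 : IntervalIntegrable (fun θ => 1/4 * (Real.sin θ ^ (2*m+2) - Real.sin θ ^ (2*m+4)))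
      volume 0 (π/2) := (Continuous.intervalIntegrable (by continuity) _ _)
  have i4 : IntervalIntegrable (fun θ : ℝ => Real.sin θ ^ (2*m+2))
      volume 0 (π/2) := (Continuous.intervalIntegrable (by continuity) _ _)
  have i5 : IntervalIntegrable (fun θ : ℝ => Real.sin θ ^ (2*m+4))
      volume 0 (π/2) := (Continuous.intervalIntegrable (by continuity) _ _)
  rw [intervalIntegral.integral_add (i1.sub i2) i3, intervalIntegral.integral_sub i1 i2,
    intervalIntegral.integral_const_mul, intervalIntegral.integral_const_mul,
    intervalIntegral.integral_const_mul, intervalIntegral.integral_sub i4 i5,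
    P1, P3]
  have w1 := wallis (m+1)
  have w2 := wallis (m+2)
  simp only [show 2*(m+1) = 2*m+2 from by ring, show 2*(m+2) = 2*m+4 from by ring] at w1 w2
  rw [w1, w2]
  have hf1 : ((2*m+4).factorial : ℝ) = (2*m+4) * ((2*m+3) * ((2*m+2).factorial : ℝ)) := by
    rw [show 2*m+4 = (2*m+3)+1 from rfl, Nat.factorial_succ, Nat.factorial_succ]; push_cast; ring
  have hf2 : ((m+2).factorial : ℝ) = (m+2) * ((m+1).factorial : ℝ) := by
    rw [Nat.factorial_succ]; push_cast; ring
  rw [hf1, hf2]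
  have h1 : ((m+1).factorial : ℝ) ≠ 0 := by positivity
  have h2 : (4:ℝ)^(m+1) ≠ 0 := by positivity
  rw [show (4:ℝ)^(m+2) = 4 * 4^(m+1) by ring]
  have h3 : ((2*m:ℝ)+1) + 1 ≠ 0 := by positivity
  have h4 : ((m:ℝ)+1) ≠ 0 := by positivity
  have h5 : ((m:ℝ)+2) ≠ 0 := by positivity
  push_cast
  generalize ((2*m+2).factorial : ℝ) = A at *
  generalize hB : ((m+1).factorial : ℝ) = B at *
  generalize hC : (4:ℝ)^(m+1) = C at *
  field_simp
  ring


lemma main (m : ℕ) (R : ℝ) (hR : 0 < R) :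
    (∫ z in ball (0 : EuclideanSpace ℝ (Fin (2 * (m+1)))) R, uR (m+1) R z)
    = (2*(m+1) : ℕ) * (π^(m+1) / ((m+1).factorial : ℝ)) *
        (R^(2*m+4) * (π * ((2*m+2).factorial : ℝ) * (2*m+3) /
          (16 * 4^(m+1) * (m+1) * (m+2) * (((m+1).factorial : ℝ))^2))) := by
  haveI : Nonempty (Fin (2*(m+1))) := ⟨⟨0, by omega⟩⟩
  haveI : Nontrivial (EuclideanSpace ℝ (Fin (2 * (m+1)))) := inferInstance
  set f : ℝ → ℝ := fun r => if r ≤ R then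
      π * R ^ 2 / 8 + r / 4 * Real.sqrt (R ^ 2 - r ^ 2) - R ^ 2 / 4 * Real.arcsin (r / R)
    else 0 with hf
  -- step A : extend to whole space
  have h0 : ∀ z : EuclideanSpace ℝ (Fin (2 * (m+1))), z ∉ ball (0 : EuclideanSpace ℝ (Fin (2 * (m+1)))) R → uR (m+1) R z = 0 := by
    intro z hz
    rw [mem_ball, dist_zero_right, not_lt] at hz
    unfold uR
    split_ifs with h
    · have hz' : ‖z‖ = R := le_antisymm h hz
      rw [hz', sub_self, Real.sqrt_zero, div_self hR.ne', Real.arcsin_one]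
      ring
    · rfl
  rw [MeasureTheory.setIntegral_eq_integral_of_forall_compl_eq_zero h0]
  have hrepr : (∫ z : EuclideanSpace ℝ (Fin (2 * (m+1))), uR (m+1) R z) = ∫ z : EuclideanSpace ℝ (Fin (2 * (m+1))), f ‖z‖ := rfl
  rw [hrepr, MeasureTheory.integral_fun_norm_addHaar volume f]
  have hdim : Module.finrank ℝ (EuclideanSpace ℝ (Fin (2 * (m+1)))) = 2*(m+1) := finrank_euclideanSpace_fin
  rw [hdim, show 2*(m+1) - 1 = 2*m+1 from by omega]
  have hvol : (volume (ball (0:EuclideanSpace ℝ (Fin (2 * (m+1)))) 1)).toReal = π^(m+1) / ((m+1).factorial : ℝ) := by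
    rw [EuclideanSpace.volume_ball]
    rw [Fintype.card_fin]
    rw [show (((2*(m+1) : ℕ) : ℝ))/2 + 1 = ((m+1 : ℕ) : ℝ) + 1 by push_cast; ring,
      Real.Gamma_nat_eq_factorial,
      show Real.sqrt π ^ (2*(m+1)) = (Real.sqrt π ^ 2)^(m+1) by rw [← pow_mul],
      Real.sq_sqrt Real.pi_pos.le]
    rw [ENNReal.toReal_mul, ENNReal.toReal_pow, ENNReal.toReal_ofReal one_pos.le,
      ENNReal.toReal_ofReal (by positivity), one_pow, one_mul]
  set g₀ : ℝ → ℝ := fun y => y^(2*m+1) *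
      (π * R ^ 2 / 8 + y / 4 * Real.sqrt (R ^ 2 - y ^ 2) - R ^ 2 / 4 * Real.arcsin (y / R))
    with hg₀
  have hg₀c : Continuous g₀ := by
    apply Continuous.mul (continuous_pow _)
    refine Continuous.sub (Continuous.add continuous_const ?_) ?_
    · exact (continuous_id.div_const 4).mul ((continuous_const.sub (continuous_pow 2)).sqrt)
    · exact continuous_const.mul (Real.continuous_arcsin.comp (continuous_id.div_const R))
  have hI : (∫ y in Set.Ioi (0:ℝ), y ^ (2*m+1) • f y)
      = R^(2*m+4) * (π * ((2*m+2).factorial : ℝ) * (2*m+3) /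
          (16 * 4^(m+1) * (m+1) * (m+2) * (((m+1).factorial : ℝ))^2)) := by
    have e1 : Set.EqOn (fun y : ℝ => y ^ (2*m+1) • f y)
        (Set.indicator (Set.Ioc 0 R) (fun y : ℝ => y ^ (2*m+1) • f y)) (Set.Ioi 0) := by
      intro y hy
      by_cases h : y ≤ R
      · rw [Set.indicator_of_mem (Set.mem_Ioc.mpr ⟨hy, h⟩)]
      · rw [Set.indicator_of_notMem (fun hmem => h (Set.mem_Ioc.mp hmem).2)]
        simp only [smul_eq_mul, hf, if_neg h, mul_zero]
    rw [MeasureTheory.setIntegral_congr_fun measurableSet_Ioi e1,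
      MeasureTheory.setIntegral_indicator measurableSet_Ioc,
      Set.inter_eq_right.mpr Set.Ioc_subset_Ioi_self,
      ← intervalIntegral.integral_of_le hR.le]
    have e2 : ∀ y ∈ Set.uIcc (0:ℝ) R, y ^ (2*m+1) • f y = g₀ y := by
      intro y hy
      rw [Set.uIcc_of_le hR.le] at hy
      simp only [smul_eq_mul, hf, hg₀, if_pos hy.2]
    rw [intervalIntegral.integral_congr e2]
    have hsub := intervalIntegral.integral_comp_smul_deriv (a := (0:ℝ)) (b := π/2)
      (f := fun θ => R * Real.sin θ) (f' := fun θ => R * Real.cos θ) (g := g₀)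
      (fun x _ => (Real.hasDerivAt_sin x).const_mul R)
      (Real.continuousOn_cos.const_smul R) hg₀c
    simp only [Real.sin_zero, Real.sin_pi_div_two, mul_zero, mul_one] at hsub
    rw [← hsub]
    have e3 : ∀ θ ∈ Set.uIcc (0:ℝ) (π/2),
        (R * Real.cos θ) • (g₀ ∘ fun θ => R * Real.sin θ) θ
        = R^(2*m+4) * (Real.sin θ ^ (2*m+1) * Real.cos θ *
            (π/8 + Real.sin θ * Real.cos θ/4 - θ/4)) := by
      intro θ hθ
      rw [Set.uIcc_of_le (by positivity : (0:ℝ) ≤ π/2)] at hθ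
      obtain ⟨h1, h2⟩ := hθ
      have hcos : 0 ≤ Real.cos θ := Real.cos_nonneg_of_mem_Icc
        ⟨by linarith [Real.pi_pos], by linarith⟩
      have hsq : R ^ 2 - (R * Real.sin θ) ^ 2 = (R * Real.cos θ)^2 := by
        linear_combination (-R^2) * (Real.sin_sq_add_cos_sq θ)
      have hs1 : Real.sqrt (R ^ 2 - (R * Real.sin θ) ^ 2) = R * Real.cos θ := by
        rw [hsq, Real.sqrt_sq (by positivity)]
      have hs2 : Real.arcsin (R * Real.sin θ / R) = θ := by
        rw [mul_div_cancel_left₀ _ hR.ne', Real.arcsin_sin (by linarith [Real.pi_pos]) h2]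
      simp only [Function.comp, hg₀, smul_eq_mul]
      rw [hs1, hs2]
      ring
    rw [intervalIntegral.integral_congr e3, intervalIntegral.integral_const_mul, keyK m]
  rw [hI, measureReal_def, hvol]
  rw [nsmul_eq_mul, smul_eq_mul]
  push_cast
  ring


theorem stmt_4 (n : ℕ) (hn : 1 ≤ n) (R : ℝ) (hR : 0 < R) (Q : ℝ) (hQ : Q = 2 * n + 2) :
    (∫ z in ball (0 : EuclideanSpace ℝ (Fin (2 * n))) R, uR n R z) =
      π ^ ((n : ℝ) + 1 / 2) * Real.Gamma ((n : ℝ) + 3 / 2) /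
        (4 * n * Real.Gamma n * Real.Gamma ((n : ℝ) + 2)) * R ^ (2 * (n : ℝ) + 2) ∧
    (∫ z in ball (0 : EuclideanSpace ℝ (Fin (2 * n))) R, uR n R z) =
      π ^ ((Q - 1) / 2) * Real.Gamma ((Q + 1) / 2) /
        (2 * (Q - 2) * Real.Gamma ((Q + 2) / 2) * Real.Gamma ((Q - 2) / 2)) * R ^ Q := by
  obtain ⟨m, rfl⟩ : ∃ m, n = m + 1 := ⟨n - 1, by omega⟩
  have key : (∫ z in ball (0 : EuclideanSpace ℝ (Fin (2 * (m+1)))) R, uR (m+1) R z) =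
      π ^ (((m+1 : ℕ) : ℝ) + 1 / 2) * Real.Gamma (((m+1 : ℕ) : ℝ) + 3 / 2) /
        (4 * ((m+1 : ℕ) : ℝ) * Real.Gamma ((m+1 : ℕ)) * Real.Gamma (((m+1 : ℕ) : ℝ) + 2)) *
        R ^ (2 * ((m+1 : ℕ) : ℝ) + 2) := by
    rw [main m R hR]
    have hG1 : Real.Gamma (((m+1 : ℕ) : ℝ) + 3/2)
        = Real.sqrt π * ((2*(m+2)).factorial : ℝ) / (4^(m+2) * ((m+2).factorial : ℝ)) := by
      rw [show (((m+1 : ℕ) : ℝ) + 3/2) = ((m+2 : ℕ) : ℝ) + 1/2 by push_cast; ring, gamma_half]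
    have hG2 : Real.Gamma (((m+1 : ℕ) : ℝ)) = (m.factorial : ℝ) := by
      rw [show (((m+1 : ℕ) : ℝ)) = ((m : ℕ) : ℝ) + 1 by push_cast; ring,
        Real.Gamma_nat_eq_factorial]
    have hG3 : Real.Gamma (((m+1 : ℕ) : ℝ) + 2) = ((m+2).factorial : ℝ) := by
      rw [show (((m+1 : ℕ) : ℝ) + 2) = (((m+2) : ℕ) : ℝ) + 1 by push_cast; ring,
        Real.Gamma_nat_eq_factorial]
    have hpow : π ^ ((((m+1) : ℕ) : ℝ) + 1/2) = π^(m+1) * Real.sqrt π := by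
      rw [Real.rpow_add Real.pi_pos, Real.rpow_natCast, ← Real.sqrt_eq_rpow]
    have hRp : R ^ (2 * (((m+1) : ℕ) : ℝ) + 2) = R ^ (2*m+4 : ℕ) := by
      rw [show (2 * (((m+1) : ℕ) : ℝ) + 2) = ((2*m+4 : ℕ) : ℝ) by push_cast; ring,
        Real.rpow_natCast]
    rw [hG1, hG2, hG3, hpow, hRp]
    have hf1 : ((2*(m+2)).factorial : ℝ) = (2*m+4) * ((2*m+3) * ((2*m+2).factorial : ℝ)) := by
      rw [show 2*(m+2) = (2*m+3)+1 from by ring, Nat.factorial_succ, Nat.factorial_succ]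
      push_cast; ring
    have hf2 : ((m+2).factorial : ℝ) = (m+2) * ((m+1) * (m.factorial : ℝ)) := by
      rw [Nat.factorial_succ, Nat.factorial_succ]; push_cast; ring
    have hf3 : ((m+1).factorial : ℝ) = (m+1) * (m.factorial : ℝ) := by
      rw [Nat.factorial_succ]; push_cast; ring
    have hss : Real.sqrt π * Real.sqrt π = π := Real.mul_self_sqrt Real.pi_pos.le
    rw [hf1, hf2, hf3, show (4:ℝ)^(m+2) = 4 * 4^(m+1) by ring]
    have h1 : (m.factorial : ℝ) ≠ 0 := by positivity
    have h2 : (4:ℝ)^(m+1) ≠ 0 := by positivity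
    have h4 : ((m:ℝ)+1) ≠ 0 := by positivity
    have h5 : ((m:ℝ)+2) ≠ 0 := by positivity
    have hs0 : Real.sqrt π ≠ 0 := by positivity
    push_cast
    generalize ((2*m+2).factorial : ℝ) = A at *
    generalize hB : (m.factorial : ℝ) = B at *
    generalize hC : (4:ℝ)^(m+1) = C at *
    generalize hD : Real.sqrt π = s at *
    rw [← hss]
    field_simp
    ring
  refine ⟨key, ?_⟩
  rw [hQ, key]
  push_cast
  rw [show (2 * ((m:ℝ)+1) + 2 - 1)/2 = ((m:ℝ)+1) + 1/2 by ring,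
    show (2 * ((m:ℝ)+1) + 2 + 1)/2 = ((m:ℝ)+1) + 3/2 by ring,
    show (2 * ((m:ℝ)+1) + 2 + 2)/2 = ((m:ℝ)+1) + 2 by ring,
    show (2 * ((m:ℝ)+1) + 2 - 2)/2 = ((m:ℝ)+1) by ring]
  ring
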